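/- There exists a constant C ≥ 0 such that for every absolutely continuous function f : [-1,0] → ℂ with derivative f' ∈ L²(-1,0), every g ∈ L²(-1,0), every real s ≠ 0 and every ξ ∈ [-1,0], one has |∫_{-1}^{ξ} sin(s(ξ−r))·(i·s·f(r) + g(r)) dr| ≤ C·‖f‖_{H¹} + ‖g‖_{L²(-1,0)}. -/

import Mathlib

open MeasureTheory

/-- The `L²` norm of `f` on the interval `(a, b)`. -/
noncomputable def L2norm (a b : ℝ) (f : ℝ → ℂ) : ℝ :=
  Real.sqrt (∫ x in a..b, ‖f x‖ ^ 2)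

/-- The `H¹(-1,0)` norm of an absolutely continuous function `f` with derivative `f'`. -/
noncomputable def H1norm (f f' : ℝ → ℂ) : ℝ :=
  Real.sqrt ((∫ x in (-1:ℝ)..0, ‖f x‖ ^ 2) + (∫ x in (-1:ℝ)..0, ‖f' x‖ ^ 2))

lemma vol_Ioc_fin : IsFiniteMeasure (volume.restrict (Set.Ioc (-1:ℝ) 0)) := by
  constructor
  rw [Measure.restrict_apply_univ, Real.volume_Ioc]
  exact ENNReal.ofReal_lt_top

lemma cs_aux (h : ℝ → ℂ) (hm : MemLp h 2 (volume.restrict (Set.Ioc (-1:ℝ) 0))) :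
    ∫ x in Set.Ioc (-1:ℝ) 0, ‖h x‖ ≤ Real.sqrt (∫ x in Set.Ioc (-1:ℝ) 0, ‖h x‖ ^ 2) := by
  haveI := vol_Ioc_fin
  have h22 : (2:ℝ).HolderConjugate 2 := (Real.holderConjugate_iff_eq_conjExponent one_lt_two).2 (by norm_num)
  have hone : MemLp (fun _ : ℝ => (1:ℝ)) (ENNReal.ofReal 2)
      (volume.restrict (Set.Ioc (-1:ℝ) 0)) := memLp_const 1
  have hn : MemLp (fun x => ‖h x‖) (ENNReal.ofReal 2)
      (volume.restrict (Set.Ioc (-1:ℝ) 0)) := by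
    have := hm.norm
    simpa [ENNReal.ofReal_ofNat] using this
  have key := integral_mul_le_Lp_mul_Lq_of_nonneg h22
    (Filter.Eventually.of_forall fun x => norm_nonneg (h x))
    (Filter.Eventually.of_forall fun _ => zero_le_one) hn hone
  simp only [mul_one] at key
  have h1 : (∫ x in Set.Ioc (-1:ℝ) 0, (1:ℝ) ^ (2:ℝ)) = 1 := by
    simp [Real.volume_Ioc]
  rw [h1, Real.one_rpow, mul_one] at key
  calc ∫ x in Set.Ioc (-1:ℝ) 0, ‖h x‖ ≤ (∫ x in Set.Ioc (-1:ℝ) 0, ‖h x‖ ^ (2:ℝ)) ^ (1/2 : ℝ) := key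
    _ = Real.sqrt (∫ x in Set.Ioc (-1:ℝ) 0, ‖h x‖ ^ 2) := by
        rw [Real.sqrt_eq_rpow]
        congr 1
        refine integral_congr_ae (Filter.Eventually.of_forall fun x => ?_)
        rw [show (2:ℝ) = ((2:ℕ):ℝ) by norm_num]; exact Real.rpow_natCast ‖h x‖ 2

lemma ftc_sin (s ξ a b : ℝ) :
    ∫ r in a..b, s * Real.sin (s * (ξ - r)) =
      Real.cos (s * (ξ - b)) - Real.cos (s * (ξ - a)) := by
  have hd : ∀ r ∈ Set.uIcc a b, HasDerivAt (fun r => Real.cos (s * (ξ - r)))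
      (s * Real.sin (s * (ξ - r))) r := by
    intro r _
    have h1 : HasDerivAt (fun r : ℝ => s * (ξ - r)) (-s) r := by
      simpa using ((hasDerivAt_id r).const_sub ξ).const_mul s
    have h2 := (Real.hasDerivAt_cos (s * (ξ - r))).comp r h1
    have h3 : -Real.sin (s * (ξ - r)) * (-s) = s * Real.sin (s * (ξ - r)) := by ring
    rw [← h3]
    exact h2
  have hint : IntervalIntegrable (fun r => s * Real.sin (s * (ξ - r))) volume a b :=
    Continuous.intervalIntegrable (by continuity) a b
  exact intervalIntegral.integral_eq_sub_of_hasDerivAt hd hint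

set_option maxHeartbeats 1000000 in
theorem sine_convolution_estimate :
    ∃ C : ℝ, 0 ≤ C ∧ ∀ f f' g : ℝ → ℂ,
      (∀ x ∈ Set.Icc (-1:ℝ) 0, f x = f (-1) + ∫ t in (-1:ℝ)..x, f' t) →
      MemLp f' 2 (volume.restrict (Set.Ioo (-1:ℝ) 0)) →
      MemLp g 2 (volume.restrict (Set.Ioo (-1:ℝ) 0)) →
      ∀ s : ℝ, s ≠ 0 → ∀ ξ ∈ Set.Icc (-1:ℝ) 0,
        ‖∫ r in (-1:ℝ)..ξ, Complex.sin (s * (ξ - r)) * (Complex.I * s * f r + g r)‖ ≤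
          C * H1norm f f' + L2norm (-1) 0 g := by
  haveI := vol_Ioc_fin
  refine ⟨6, by norm_num, ?_⟩
  intro f f' g hf hf'0 hg0 s hs ξ hξ
  obtain ⟨hξ1, hξ2⟩ := hξ
  have hrIoc : volume.restrict (Set.Ioo (-1:ℝ) 0) = volume.restrict (Set.Ioc (-1:ℝ) 0) :=
    Measure.restrict_congr_set Ioo_ae_eq_Ioc
  rw [hrIoc] at hf'0 hg0
  have hf'int : IntegrableOn f' (Set.Ioc (-1:ℝ) 0) volume := hf'0.integrable (by norm_num)
  have hgint : IntegrableOn g (Set.Ioc (-1:ℝ) 0) volume := hg0.integrable (by norm_num)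
  set c : ℂ := f (-1) with hc
  set F : ℝ → ℂ := fun x => ∫ t in (-1:ℝ)..x, f' t with hF
  have hFset : ∀ x : ℝ, -1 ≤ x → F x = ∫ t in Set.Ioc (-1:ℝ) x, f' t := fun x hx =>
    intervalIntegral.integral_of_le hx
  have hFcont : ContinuousOn F (Set.Icc (-1:ℝ) 0) := by
    have h0 : IntegrableOn f' (Set.Icc (-1:ℝ) 0) volume := by
      rwa [integrableOn_Icc_iff_integrableOn_Ioc]
    exact (intervalIntegral.continuousOn_primitive h0).congr fun x hx => hFset x hx.1
  set Mf' : ℝ := ∫ t in Set.Ioc (-1:ℝ) 0, ‖f' t‖ with hMf'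
  have hMf'nonneg : 0 ≤ Mf' := integral_nonneg fun t => norm_nonneg _
  have hFbound : ∀ x ∈ Set.Icc (-1:ℝ) 0, ‖F x‖ ≤ Mf' := by
    intro x hx
    rw [hFset x hx.1]
    calc ‖∫ t in Set.Ioc (-1:ℝ) x, f' t‖ ≤ ∫ t in Set.Ioc (-1:ℝ) x, ‖f' t‖ :=
        norm_integral_le_integral_norm _
      _ ≤ Mf' := by
          apply setIntegral_mono_set hf'int.norm
            (Filter.Eventually.of_forall fun t => norm_nonneg _)
          exact HasSubset.Subset.eventuallyLE (Set.Ioc_subset_Ioc_right hx.2)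
  have hfeq : ∀ x ∈ Set.Icc (-1:ℝ) 0, f x = c + F x := fun x hx => hf x hx
  have hcFint : IntegrableOn (fun x => c + F x) (Set.Icc (-1:ℝ) 0) volume :=
    (continuousOn_const.add hFcont).integrableOn_Icc
  have hfint : IntegrableOn f (Set.Ioc (-1:ℝ) 0) volume := by
    refine ((hcFint.mono_set Set.Ioc_subset_Icc_self).congr_fun ?_ measurableSet_Ioc)
    exact fun x hx => (hfeq x (Set.Ioc_subset_Icc_self hx)).symm
  have hFintIoc : IntegrableOn F (Set.Ioc (-1:ℝ) 0) volume :=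
    (hFcont.integrableOn_Icc).mono_set Set.Ioc_subset_Icc_self
  have hfmem : MemLp f 2 (volume.restrict (Set.Ioc (-1:ℝ) 0)) := by
    refine MemLp.of_bound hfint.aestronglyMeasurable (‖c‖ + Mf') ?_
    filter_upwards [ae_restrict_mem measurableSet_Ioc] with x hx
    rw [hfeq x (Set.Ioc_subset_Icc_self hx)]
    exact (norm_add_le _ _).trans (add_le_add_right (hFbound x (Set.Ioc_subset_Icc_self hx)) _)
  have hcid : c = ∫ x in Set.Ioc (-1:ℝ) 0, (f x - F x) := by
    have h1 : Set.EqOn (fun x => f x - F x) (fun _ => c) (Set.Ioc (-1:ℝ) 0) := by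
      intro x hx
      show f x - F x = c
      rw [hfeq x (Set.Ioc_subset_Icc_self hx)]; ring
    rw [setIntegral_congr_fun measurableSet_Ioc h1]
    simp [Real.volume_Ioc]
  have hcbound : ‖c‖ ≤ (∫ x in Set.Ioc (-1:ℝ) 0, ‖f x‖) + Mf' := by
    rw [hcid]
    calc ‖∫ x in Set.Ioc (-1:ℝ) 0, (f x - F x)‖
        ≤ ∫ x in Set.Ioc (-1:ℝ) 0, ‖f x - F x‖ := norm_integral_le_integral_norm _
      _ ≤ ∫ x in Set.Ioc (-1:ℝ) 0, (‖f x‖ + Mf') := by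
          refine integral_mono_ae ((hfint.sub hFintIoc).norm)
            (hfint.norm.add (integrable_const _)) ?_
          filter_upwards [ae_restrict_mem measurableSet_Ioc] with x hx
          exact (norm_sub_le _ _).trans
            (add_le_add_right (hFbound x (Set.Ioc_subset_Icc_self hx)) _)
      _ = (∫ x in Set.Ioc (-1:ℝ) 0, ‖f x‖) + Mf' := by
          rw [integral_add hfint.norm (integrable_const _)]
          simp [Real.volume_Ioc]
  -- kernel
  set k : ℝ → ℂ := fun r => ((s * Real.sin (s * (ξ - r)) : ℝ) : ℂ) with hk
  have hkcont : Continuous k :=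
    Complex.continuous_ofReal.comp (continuous_const.mul (Real.continuous_sin.comp
      (continuous_const.mul (continuous_const.sub continuous_id))))
  have hknorm : ∀ r, ‖k r‖ ≤ |s| := by
    intro r
    rw [hk]
    simp only [Complex.norm_real, Real.norm_eq_abs, abs_mul]
    exact mul_le_of_le_one_right (abs_nonneg s) (Real.abs_sin_le_one _)
  have hJsub : Set.Ioc (-1:ℝ) ξ ⊆ Set.Ioc (-1:ℝ) 0 := Set.Ioc_subset_Ioc_right hξ2
  have hf'J : IntegrableOn f' (Set.Ioc (-1:ℝ) ξ) volume := hf'int.mono_set hJsub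
  -- integrability of the three pieces on Ioc (-1) ξ
  have i1 : IntegrableOn (fun r => Complex.I * c * k r) (Set.Ioc (-1:ℝ) ξ) volume :=
    (hkcont.integrableOn_Ioc).const_mul _
  have i2 : IntegrableOn (fun r => k r * F r) (Set.Ioc (-1:ℝ) ξ) volume := by
    have : ContinuousOn (fun r => k r * F r) (Set.Icc (-1:ℝ) ξ) :=
      (hkcont.continuousOn).mul (hFcont.mono (Set.Icc_subset_Icc_right hξ2))
    exact this.integrableOn_Icc.mono_set Set.Ioc_subset_Icc_self
  have i2' : IntegrableOn (fun r => Complex.I * (k r * F r)) (Set.Ioc (-1:ℝ) ξ) volume :=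
    i2.const_mul _
  have i3 : IntegrableOn (fun r => ((Real.sin (s * (ξ - r)) : ℝ) : ℂ) * g r)
      (Set.Ioc (-1:ℝ) ξ) volume := by
    refine (hgint.mono_set hJsub).bdd_mul ?_ (c := 1) (Filter.Eventually.of_forall fun r => ?_)
    · exact (Complex.continuous_ofReal.comp (Real.continuous_sin.comp
        (continuous_const.mul (continuous_const.sub continuous_id)))).aestronglyMeasurable
    · simp only [Complex.norm_real, Real.norm_eq_abs]
      exact Real.abs_sin_le_one _
  -- splitting
  have hsplit : (∫ r in (-1:ℝ)..ξ, Complex.sin (s * (ξ - r)) * (Complex.I * s * f r + g r))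
      = Complex.I * c * (∫ r in Set.Ioc (-1:ℝ) ξ, k r)
        + Complex.I * (∫ r in Set.Ioc (-1:ℝ) ξ, k r * F r)
        + ∫ r in Set.Ioc (-1:ℝ) ξ, ((Real.sin (s * (ξ - r)) : ℝ) : ℂ) * g r := by
    have hpt : Set.EqOn (fun r : ℝ => Complex.sin (s * (ξ - r)) * (Complex.I * s * f r + g r))
        (fun r : ℝ => Complex.I * c * k r + (Complex.I * (k r * F r)
          + ((Real.sin (s * (ξ - r)) : ℝ) : ℂ) * g r)) (Set.Ioc (-1:ℝ) ξ) := by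
      intro r hr
      have hrIcc : r ∈ Set.Icc (-1:ℝ) 0 := ⟨le_of_lt hr.1, hr.2.trans hξ2⟩
      show Complex.sin (s * (ξ - r)) * (Complex.I * s * f r + g r)
          = Complex.I * c * k r + (Complex.I * (k r * F r)
            + ((Real.sin (s * (ξ - r)) : ℝ) : ℂ) * g r)
      rw [hfeq r hrIcc, hk]
      push_cast [Complex.ofReal_sin]
      ring
    have i23 : IntegrableOn (fun r => Complex.I * (k r * F r)
        + ((Real.sin (s * (ξ - r)) : ℝ) : ℂ) * g r) (Set.Ioc (-1:ℝ) ξ) volume := i2'.add i3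
    rw [intervalIntegral.integral_of_le hξ1, setIntegral_congr_fun measurableSet_Ioc hpt,
      integral_add i1 i23, integral_add i2' i3, integral_const_mul, integral_const_mul,
      ← add_assoc]
  -- Fubini for the middle term
  have fub : (∫ r in Set.Ioc (-1:ℝ) ξ, k r * F r)
      = ∫ t in Set.Ioc (-1:ℝ) ξ, (1 - ((Real.cos (s * (ξ - t)) : ℝ) : ℂ)) * f' t := by
    set J := Set.Ioc (-1:ℝ) ξ with hJ
    have hJm : MeasurableSet J := measurableSet_Ioc
    set μJ := volume.restrict J with hμJ
    set Hfun : ℝ × ℝ → ℂ :=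
      fun p => Set.indicator {q : ℝ × ℝ | q.2 ≤ q.1} (fun q => k q.1 * f' q.2) p with hHfun
    have hHint : Integrable Hfun (μJ.prod μJ) := by
      have hmeas : AEStronglyMeasurable Hfun (μJ.prod μJ) := by
        apply AEStronglyMeasurable.indicator _ (measurableSet_le measurable_snd measurable_fst)
        exact ((hkcont.comp continuous_fst).aestronglyMeasurable).mul
          (hf'J.aestronglyMeasurable.comp_snd)
      refine Integrable.mono' ((integrable_const (|s|)).mul_prod hf'J.norm) hmeas
        (Filter.Eventually.of_forall fun p => ?_)
      by_cases hp : p ∈ {q : ℝ × ℝ | q.2 ≤ q.1}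
      · rw [hHfun]
        simp only [Set.indicator_of_mem hp, norm_mul]
        exact mul_le_mul_of_nonneg_right (hknorm p.1) (norm_nonneg _)
      · rw [hHfun]
        simp only [Set.indicator_of_notMem hp, norm_zero]
        positivity
    have lhs_eq : (∫ r in J, k r * F r) = ∫ r in J, (∫ t in J, Hfun (r, t)) := by
      apply setIntegral_congr_fun hJm
      intro r hr
      show k r * F r = ∫ t in J, Hfun (r, t)
      have h1 : (∫ t in J, Hfun (r, t))
          = ∫ t in J, Set.indicator (Set.Iic r) (fun t => k r * f' t) t := by
        apply setIntegral_congr_fun hJm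
        intro t _
        by_cases ht : t ≤ r
        · rw [hHfun]
          simp [Set.indicator_of_mem, ht, Set.mem_setOf_eq]
        · rw [hHfun]
          simp [Set.indicator_of_notMem, ht, Set.mem_setOf_eq]
      rw [h1, setIntegral_indicator measurableSet_Iic]
      have h2 : J ∩ Set.Iic r = Set.Ioc (-1:ℝ) r := by
        rw [hJ, Set.Ioc_inter_Iic, min_eq_right hr.2]
      rw [h2, integral_const_mul, ← hFset r (le_of_lt hr.1)]
    have rhs_eq : (∫ t in J, (∫ r in J, Hfun (r, t)))
        = ∫ t in J, (1 - ((Real.cos (s * (ξ - t)) : ℝ) : ℂ)) * f' t := by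
      apply setIntegral_congr_fun hJm
      intro t ht
      show (∫ r in J, Hfun (r, t)) = (1 - ((Real.cos (s * (ξ - t)) : ℝ) : ℂ)) * f' t
      have h1 : (∫ r in J, Hfun (r, t))
          = ∫ r in J, Set.indicator (Set.Ici t) (fun r => k r * f' t) r := by
        apply setIntegral_congr_fun hJm
        intro r _
        by_cases htr : t ≤ r
        · rw [hHfun]
          simp [Set.indicator_of_mem, htr, Set.mem_setOf_eq]
        · rw [hHfun]
          simp [Set.indicator_of_notMem, htr, Set.mem_setOf_eq]
      rw [h1, setIntegral_indicator measurableSet_Ici]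
      have h2 : J ∩ Set.Ici t = Set.Icc t ξ := by
        rw [hJ]
        ext r
        simp only [Set.mem_inter_iff, Set.mem_Ioc, Set.mem_Ici, Set.mem_Icc]
        constructor
        · rintro ⟨⟨_, h2⟩, h3⟩; exact ⟨h3, h2⟩
        · rintro ⟨h1', h2'⟩; exact ⟨⟨lt_of_lt_of_le ht.1 h1', h2'⟩, h1'⟩
      rw [h2, integral_Icc_eq_integral_Ioc, integral_mul_const,
        ← intervalIntegral.integral_of_le ht.2]
      have h3 : (∫ r in t..ξ, k r)
          = ((Real.cos (s * (ξ - ξ)) - Real.cos (s * (ξ - t)) : ℝ) : ℂ) := by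
        rw [hk, intervalIntegral.integral_ofReal, ftc_sin]
      rw [h3]
      rw [show s * (ξ - ξ) = 0 by ring, Real.cos_zero]
      push_cast
      ring
    have huncurry : Function.uncurry (fun r t => Hfun (r, t)) = Hfun := by
      funext p
      simp [Function.uncurry]
    rw [lhs_eq, ← rhs_eq]
    exact integral_integral_swap (by rwa [huncurry])
  -- bounds
  have hb1 : ‖Complex.I * c * (∫ r in Set.Ioc (-1:ℝ) ξ, k r)‖ ≤ 2 * ‖c‖ := by
    have h3 : (∫ r in Set.Ioc (-1:ℝ) ξ, k r)
        = ((Real.cos (s * (ξ - ξ)) - Real.cos (s * (ξ - (-1))) : ℝ) : ℂ) := by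
      rw [← intervalIntegral.integral_of_le hξ1, hk, intervalIntegral.integral_ofReal, ftc_sin]
    rw [h3, norm_mul, norm_mul, Complex.norm_I, one_mul]
    simp only [Complex.norm_real, Real.norm_eq_abs]
    have h4 : |Real.cos (s * (ξ - ξ)) - Real.cos (s * (ξ - (-1)))| ≤ 2 := by
      calc |Real.cos (s * (ξ - ξ)) - Real.cos (s * (ξ - (-1)))|
          ≤ |Real.cos (s * (ξ - ξ))| + |Real.cos (s * (ξ - (-1)))| := abs_sub _ _
        _ ≤ 2 := by
            have := Real.abs_cos_le_one (s * (ξ - ξ))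
            have := Real.abs_cos_le_one (s * (ξ - (-1)))
            linarith
    calc ‖c‖ * |Real.cos (s * (ξ - ξ)) - Real.cos (s * (ξ - (-1)))| ≤ ‖c‖ * 2 :=
        mul_le_mul_of_nonneg_left h4 (norm_nonneg c)
      _ = 2 * ‖c‖ := mul_comm _ _
  have hb2 : ‖Complex.I * (∫ t in Set.Ioc (-1:ℝ) ξ, (1 - ((Real.cos (s * (ξ - t)) : ℝ) : ℂ)) * f' t)‖
      ≤ 2 * Mf' := by
    rw [norm_mul, Complex.norm_I, one_mul]
    have i4 : IntegrableOn (fun t => (1 - ((Real.cos (s * (ξ - t)) : ℝ) : ℂ)) * f' t)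
        (Set.Ioc (-1:ℝ) ξ) volume := by
      refine hf'J.bdd_mul ?_ (c := 2) (Filter.Eventually.of_forall fun t => ?_)
      · exact (continuous_const.sub (Complex.continuous_ofReal.comp
          (Real.continuous_cos.comp (continuous_const.mul
            (continuous_const.sub continuous_id))))).aestronglyMeasurable
      · calc ‖1 - ((Real.cos (s * (ξ - t)) : ℝ) : ℂ)‖
            ≤ ‖(1:ℂ)‖ + ‖((Real.cos (s * (ξ - t)) : ℝ) : ℂ)‖ := norm_sub_le _ _
          _ ≤ 2 := by
              simp only [norm_one, Complex.norm_real, Real.norm_eq_abs]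
              have := Real.abs_cos_le_one (s * (ξ - t))
              linarith
    calc ‖∫ t in Set.Ioc (-1:ℝ) ξ, (1 - ((Real.cos (s * (ξ - t)) : ℝ) : ℂ)) * f' t‖
        ≤ ∫ t in Set.Ioc (-1:ℝ) ξ, ‖(1 - ((Real.cos (s * (ξ - t)) : ℝ) : ℂ)) * f' t‖ :=
          norm_integral_le_integral_norm _
      _ ≤ ∫ t in Set.Ioc (-1:ℝ) ξ, 2 * ‖f' t‖ := by
          refine integral_mono_ae i4.norm (hf'J.norm.const_mul 2)
            (Filter.Eventually.of_forall fun t => ?_)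
          show ‖(1 - ((Real.cos (s * (ξ - t)) : ℝ) : ℂ)) * f' t‖ ≤ 2 * ‖f' t‖
          rw [norm_mul]
          refine mul_le_mul_of_nonneg_right ?_ (norm_nonneg _)
          calc ‖1 - ((Real.cos (s * (ξ - t)) : ℝ) : ℂ)‖
              ≤ ‖(1:ℂ)‖ + ‖((Real.cos (s * (ξ - t)) : ℝ) : ℂ)‖ := norm_sub_le _ _
            _ ≤ 2 := by
                simp only [norm_one, Complex.norm_real, Real.norm_eq_abs]
                have := Real.abs_cos_le_one (s * (ξ - t))
                linarith
      _ = 2 * ∫ t in Set.Ioc (-1:ℝ) ξ, ‖f' t‖ := integral_const_mul 2 _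
      _ ≤ 2 * Mf' := by
          refine mul_le_mul_of_nonneg_left ?_ (by norm_num)
          apply setIntegral_mono_set hf'int.norm
            (Filter.Eventually.of_forall fun t => norm_nonneg _)
          exact HasSubset.Subset.eventuallyLE hJsub
  have hb3 : ‖∫ r in Set.Ioc (-1:ℝ) ξ, ((Real.sin (s * (ξ - r)) : ℝ) : ℂ) * g r‖
      ≤ ∫ r in Set.Ioc (-1:ℝ) 0, ‖g r‖ := by
    calc ‖∫ r in Set.Ioc (-1:ℝ) ξ, ((Real.sin (s * (ξ - r)) : ℝ) : ℂ) * g r‖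
        ≤ ∫ r in Set.Ioc (-1:ℝ) ξ, ‖((Real.sin (s * (ξ - r)) : ℝ) : ℂ) * g r‖ :=
          norm_integral_le_integral_norm _
      _ ≤ ∫ r in Set.Ioc (-1:ℝ) ξ, ‖g r‖ := by
          refine integral_mono_ae i3.norm ((hgint.mono_set hJsub).norm)
            (Filter.Eventually.of_forall fun r => ?_)
          show ‖((Real.sin (s * (ξ - r)) : ℝ) : ℂ) * g r‖ ≤ ‖g r‖
          rw [norm_mul]
          refine mul_le_of_le_one_left (norm_nonneg _) ?_
          simp only [Complex.norm_real, Real.norm_eq_abs]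
          exact Real.abs_sin_le_one _
      _ ≤ ∫ r in Set.Ioc (-1:ℝ) 0, ‖g r‖ := by
          apply setIntegral_mono_set hgint.norm
            (Filter.Eventually.of_forall fun t => norm_nonneg _)
          exact HasSubset.Subset.eventuallyLE hJsub
  -- Cauchy-Schwarz facts
  have csf : (∫ x in Set.Ioc (-1:ℝ) 0, ‖f x‖) ≤ Real.sqrt (∫ x in Set.Ioc (-1:ℝ) 0, ‖f x‖ ^ 2) :=
    cs_aux f hfmem
  have csf' : Mf' ≤ Real.sqrt (∫ x in Set.Ioc (-1:ℝ) 0, ‖f' x‖ ^ 2) := cs_aux f' hf'0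
  have csg : (∫ x in Set.Ioc (-1:ℝ) 0, ‖g x‖) ≤ Real.sqrt (∫ x in Set.Ioc (-1:ℝ) 0, ‖g x‖ ^ 2) :=
    cs_aux g hg0
  -- relate to H1norm and L2norm
  have hio : ((-1:ℝ) ≤ 0) := by norm_num
  have hH1 : H1norm f f' = Real.sqrt ((∫ x in Set.Ioc (-1:ℝ) 0, ‖f x‖ ^ 2)
      + (∫ x in Set.Ioc (-1:ℝ) 0, ‖f' x‖ ^ 2)) := by
    rw [H1norm, intervalIntegral.integral_of_le hio, intervalIntegral.integral_of_le hio]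
  have hL2 : L2norm (-1) 0 g = Real.sqrt (∫ x in Set.Ioc (-1:ℝ) 0, ‖g x‖ ^ 2) := by
    rw [L2norm, intervalIntegral.integral_of_le hio]
  have hnn1 : 0 ≤ ∫ x in Set.Ioc (-1:ℝ) 0, ‖f x‖ ^ 2 := integral_nonneg fun x => sq_nonneg _
  have hnn2 : 0 ≤ ∫ x in Set.Ioc (-1:ℝ) 0, ‖f' x‖ ^ 2 := integral_nonneg fun x => sq_nonneg _
  have hA : Real.sqrt (∫ x in Set.Ioc (-1:ℝ) 0, ‖f x‖ ^ 2) ≤ H1norm f f' := by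
    rw [hH1]
    exact Real.sqrt_le_sqrt (by linarith)
  have hB : Real.sqrt (∫ x in Set.Ioc (-1:ℝ) 0, ‖f' x‖ ^ 2) ≤ H1norm f f' := by
    rw [hH1]
    exact Real.sqrt_le_sqrt (by linarith)
  -- final assembly
  rw [hsplit, fub, hL2]
  calc ‖Complex.I * c * (∫ r in Set.Ioc (-1:ℝ) ξ, k r)
        + Complex.I * (∫ t in Set.Ioc (-1:ℝ) ξ, (1 - ((Real.cos (s * (ξ - t)) : ℝ) : ℂ)) * f' t)
        + ∫ r in Set.Ioc (-1:ℝ) ξ, ((Real.sin (s * (ξ - r)) : ℝ) : ℂ) * g r‖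
      ≤ ‖Complex.I * c * (∫ r in Set.Ioc (-1:ℝ) ξ, k r)
          + Complex.I * (∫ t in Set.Ioc (-1:ℝ) ξ, (1 - ((Real.cos (s * (ξ - t)) : ℝ) : ℂ)) * f' t)‖
        + ‖∫ r in Set.Ioc (-1:ℝ) ξ, ((Real.sin (s * (ξ - r)) : ℝ) : ℂ) * g r‖ := norm_add_le _ _
    _ ≤ (‖Complex.I * c * (∫ r in Set.Ioc (-1:ℝ) ξ, k r)‖
          + ‖Complex.I * (∫ t in Set.Ioc (-1:ℝ) ξ, (1 - ((Real.cos (s * (ξ - t)) : ℝ) : ℂ)) * f' t)‖)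
        + ‖∫ r in Set.Ioc (-1:ℝ) ξ, ((Real.sin (s * (ξ - r)) : ℝ) : ℂ) * g r‖ := by
        gcongr
        exact norm_add_le _ _
    _ ≤ (2 * ‖c‖ + 2 * Mf') + ∫ r in Set.Ioc (-1:ℝ) 0, ‖g r‖ := by
        gcongr
    _ ≤ 6 * H1norm f f' + Real.sqrt (∫ x in Set.Ioc (-1:ℝ) 0, ‖g x‖ ^ 2) := by
        have := hcbound
        have := csf
        have := csf'
        have := csg
        nlinarith [hA, hB, hMf'nonneg, norm_nonneg c]
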